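/- Let N be a finite set, let f : 2^N → ℝ be non-negative and γ-weakly submodular for some γ ∈ (0, 1], and let O ⊆ N with |O| = k. For an integer 0 ≤ i ≤ k, let A_{k−i} denote the average of f(S) over all subsets S ⊆ O with |S| = k − i. Then A_{k−i} ≥ (1 − ((i + 1)/(k + 1))^γ)·f(O). -/

import Mathlib

lemma bern_aux (γ : ℝ) (h0 : 0 < γ) (j : ℝ) (hj : 1 ≤ j) :
    1 - γ / j ≤ (j / (j + 1)) ^ γ := by
  have hj0 : (0:ℝ) < j := by linarith
  have hx : (0:ℝ) < j / (j + 1) := by positivity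
  rw [Real.rpow_def_of_pos hx]
  have hlog : -(1/j) ≤ Real.log (j / (j + 1)) := by
    have h := Real.log_le_sub_one_of_pos (show (0:ℝ) < (j+1)/j by positivity)
    rw [Real.log_div (by linarith) (by linarith)] at h
    rw [Real.log_div (by linarith) (by linarith)]
    have h4 : (j+1)/j - 1 = 1/j := by field_simp; ring
    linarith [h4 ▸ h]
  have hexp := Real.add_one_le_exp (Real.log (j/(j+1)) * γ)
  have h2 := mul_le_mul_of_nonneg_right hlog (le_of_lt h0)
  have h3 : -(1/j)*γ = -(γ/j) := by ring
  linarith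

lemma double_count {α : Type*} [DecidableEq α] (O : Finset α) (s : ℕ) (f : Finset α → ℝ) :
    ∑ A ∈ O.powersetCard s, ∑ u ∈ O \ A, f (insert u A)
      = ((s : ℝ) + 1) * ∑ B ∈ O.powersetCard (s + 1), f B := by
  have h : ((s : ℝ) + 1) * ∑ B ∈ O.powersetCard (s + 1), f B
      = ∑ B ∈ O.powersetCard (s + 1), ∑ u ∈ B, f B := by
    rw [Finset.mul_sum]
    refine Finset.sum_congr rfl fun B hB => ?_
    rw [Finset.sum_const, nsmul_eq_mul, (Finset.mem_powersetCard.mp hB).2]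
    push_cast; ring
  rw [h, Finset.sum_sigma', Finset.sum_sigma']
  refine Finset.sum_bij' (fun p _ => ⟨insert p.2 p.1, p.2⟩)
    (fun p _ => ⟨p.1.erase p.2, p.2⟩) ?_ ?_ ?_ ?_ ?_
  · rintro ⟨A, u⟩ hp
    simp only [Finset.mem_sigma, Finset.mem_powersetCard, Finset.mem_sdiff] at hp ⊢
    obtain ⟨⟨hAO, hAc⟩, huO, huA⟩ := hp
    refine ⟨⟨Finset.insert_subset huO hAO, ?_⟩, Finset.mem_insert_self _ _⟩
    rw [Finset.card_insert_of_notMem huA, hAc]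
  · rintro ⟨B, u⟩ hp
    simp only [Finset.mem_sigma, Finset.mem_powersetCard, Finset.mem_sdiff] at hp ⊢
    obtain ⟨⟨hBO, hBc⟩, huB⟩ := hp
    refine ⟨⟨(Finset.erase_subset _ _).trans hBO, ?_⟩, hBO huB, Finset.notMem_erase _ _⟩
    rw [Finset.card_erase_of_mem huB, hBc]; rfl
  · rintro ⟨A, u⟩ hp
    simp only [Finset.mem_sigma, Finset.mem_sdiff] at hp
    simp [Finset.erase_insert_of_ne, Finset.erase_insert, hp.2.2]
  · rintro ⟨B, u⟩ hp
    simp only [Finset.mem_sigma] at hp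
    simp [Finset.insert_erase hp.2]
  · rintro ⟨A, u⟩ hp
    simp

theorem average_lower_bound_rpow {α : Type*} [DecidableEq α] [Fintype α]
    (f : Finset α → ℝ) (hnn : ∀ S : Finset α, 0 ≤ f S)
    (γ : ℝ) (hγ : 0 < γ ∧ γ ≤ 1)
    (hws : ∀ A B : Finset α,
      γ * (f (A ∪ B) - f A) ≤ ∑ u ∈ B, (f (insert u A) - f A))
    (O : Finset α) (k : ℕ) (hk : O.card = k)
    (i : ℕ) (hi : i ≤ k) :
    (∑ S ∈ O.powersetCard (k - i), f S) / ((O.powersetCard (k - i)).card : ℝ) ≥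
      (1 - (((i : ℝ) + 1) / ((k : ℝ) + 1)) ^ γ) * f O := by
  obtain ⟨hγ0, hγ1⟩ := hγ
  set a : ℕ → ℝ := fun s => (∑ S ∈ O.powersetCard s, f S) / ((k.choose s : ℝ)) with ha
  have hcard : ∀ s, (O.powersetCard s).card = k.choose s := by
    intro s; rw [Finset.card_powersetCard, hk]
  -- chain inequality
  have chain : ∀ m, m < k → γ * (f O - a m) ≤ ((k : ℝ) - (m : ℝ)) * (a (m+1) - a m) := by
    intro m hm
    have hCm : (0 : ℝ) < (k.choose m : ℝ) := by
      exact_mod_cast Nat.choose_pos hm.le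
    have hCm1 : (0 : ℝ) < (k.choose (m+1) : ℝ) := by
      exact_mod_cast Nat.choose_pos hm
    have hsum : ∑ A ∈ O.powersetCard m, γ * (f (A ∪ O) - f A)
        ≤ ∑ A ∈ O.powersetCard m, ∑ u ∈ O, (f (insert u A) - f A) :=
      Finset.sum_le_sum fun A _ => hws A O
    have l1 : ∑ A ∈ O.powersetCard m, γ * (f (A ∪ O) - f A)
        = γ * ((k.choose m : ℝ) * f O - ∑ A ∈ O.powersetCard m, f A) := by
      have hu : ∀ A ∈ O.powersetCard m, γ * (f (A ∪ O) - f A) = γ * (f O - f A) := by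
        intro A hA
        rw [Finset.union_eq_right.mpr (Finset.mem_powersetCard.mp hA).1]
      rw [Finset.sum_congr rfl hu, ← Finset.mul_sum, Finset.sum_sub_distrib,
        Finset.sum_const, hcard m, nsmul_eq_mul]
    have r1 : ∑ A ∈ O.powersetCard m, ∑ u ∈ O, (f (insert u A) - f A)
        = ((m:ℝ)+1) * (∑ B ∈ O.powersetCard (m+1), f B)
          + ((m:ℝ) - (k:ℝ)) * ∑ A ∈ O.powersetCard m, f A := by
      have step : ∀ A ∈ O.powersetCard m, ∑ u ∈ O, (f (insert u A) - f A)
          = (∑ u ∈ O \ A, f (insert u A)) + ((m:ℝ) - (k:ℝ)) * f A := by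
        intro A hA
        obtain ⟨hAO, hAc⟩ := Finset.mem_powersetCard.mp hA
        rw [Finset.sum_sub_distrib, Finset.sum_const, hk, nsmul_eq_mul]
        rw [← Finset.sum_sdiff hAO]
        have h5 : ∑ u ∈ A, f (insert u A) = (m : ℝ) * f A := by
          rw [show ∑ u ∈ A, f (insert u A) = ∑ u ∈ A, f A from
            Finset.sum_congr rfl fun u hu => by rw [Finset.insert_eq_self.mpr hu]]
          rw [Finset.sum_const, hAc, nsmul_eq_mul]
        rw [h5]; ring
      rw [Finset.sum_congr rfl step, Finset.sum_add_distrib, ← Finset.mul_sum,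
        double_count O m f]
    rw [l1, r1] at hsum
    -- pass to averages
    have hSm : ∑ A ∈ O.powersetCard m, f A = (k.choose m : ℝ) * a m := by
      rw [ha]; field_simp
    have hSm1 : ∑ B ∈ O.powersetCard (m+1), f B = (k.choose (m+1) : ℝ) * a (m+1) := by
      rw [ha]; field_simp
    have hrel : ((m:ℝ)+1) * (k.choose (m+1) : ℝ) = ((k:ℝ) - (m:ℝ)) * (k.choose m : ℝ) := by
      have := Nat.choose_succ_right_eq k m
      have hc : ((k.choose (m+1) * (m+1) : ℕ) : ℝ) = ((k.choose m * (k - m) : ℕ) : ℝ) := by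
        exact_mod_cast congrArg (Nat.cast : ℕ → ℝ) this
      push_cast [Nat.cast_sub hm.le] at hc
      linarith
    rw [hSm, hSm1] at hsum
    have key : (k.choose m : ℝ) * (γ * (f O - a m))
        ≤ (k.choose m : ℝ) * (((k:ℝ) - (m:ℝ)) * (a (m+1) - a m)) := by
      have h9 : ((m:ℝ)+1) * (k.choose (m+1) : ℝ) * a (m+1)
          = ((k:ℝ) - (m:ℝ)) * (k.choose m : ℝ) * a (m+1) := by rw [hrel]
      nlinarith [hsum, h9]
    exact le_of_mul_le_mul_left (by linarith [key]) hCm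
  -- main induction
  have main : ∀ m, m ≤ k →
      f O - a m ≤ ((((k - m : ℕ) : ℝ) + 1) / ((k:ℝ) + 1)) ^ γ * f O := by
    intro m
    induction m with
    | zero =>
      intro _
      have h0 : a 0 = f ∅ := by
        rw [ha]; simp [Finset.powersetCard_zero]
      have hone : ((((k - 0 : ℕ) : ℝ) + 1) / ((k:ℝ) + 1)) = 1 := by
        rw [Nat.sub_zero]
        field_simp
      rw [h0, hone, Real.one_rpow, one_mul]
      linarith [hnn ∅]
    | succ m ih =>
      intro hm1
      have hm : m < k := hm1
      have IH := ih hm.le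
      have hch := chain m hm
      set j : ℝ := ((k - m : ℕ) : ℝ) with hj
      have hjeq : j = (k : ℝ) - (m : ℝ) := by
        rw [hj, Nat.cast_sub hm.le]
      have hj1 : (1 : ℝ) ≤ j := by
        rw [hj]; exact_mod_cast Nat.one_le_iff_ne_zero.mpr (Nat.sub_ne_zero_of_lt hm)
      have hj0 : (0:ℝ) < j := by linarith
      -- j * (f O - a (m+1)) ≤ (j - γ) * (f O - a m)
      have step1 : j * (f O - a (m+1)) ≤ (j - γ) * (f O - a m) := by
        rw [hjeq] at *
        nlinarith [hch]
      have hcnn : (0:ℝ) ≤ ((j + 1) / ((k:ℝ) + 1)) ^ γ := Real.rpow_nonneg (by positivity) γ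
      have step2 : (j - γ) * (f O - a m) ≤ (j - γ) * (((j + 1) / ((k:ℝ) + 1)) ^ γ * f O) := by
        apply mul_le_mul_of_nonneg_left _ (by linarith)
        have hcast : (((k - m : ℕ) : ℝ) + 1) = j + 1 := by rw [hj]
        rw [← hcast]; exact IH
      have hbern := bern_aux γ hγ0 j hj1
      have step3 : (j - γ) * (((j + 1) / ((k:ℝ) + 1)) ^ γ * f O)
          ≤ j * ((j / ((k:ℝ) + 1)) ^ γ * f O) := by
        have hmul : (j / (j+1)) ^ γ * ((j + 1) / ((k:ℝ) + 1)) ^ γ = (j / ((k:ℝ)+1)) ^ γ := by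
          rw [← Real.mul_rpow (by positivity) (by positivity)]
          congr 1
          field_simp
        have h6 : (j - γ) * ((j + 1) / ((k:ℝ) + 1)) ^ γ ≤ j * (j / ((k:ℝ)+1)) ^ γ := by
          have h7 : (j - γ) = j * (1 - γ / j) := by field_simp
          rw [h7, mul_assoc, ← hmul]
          apply mul_le_mul_of_nonneg_left _ hj0.le
          exact mul_le_mul_of_nonneg_right hbern hcnn
        nlinarith [hnn O, h6]
      have hfinal : j * (f O - a (m+1)) ≤ j * ((j / ((k:ℝ) + 1)) ^ γ * f O) := by
        linarith
      have h8 := le_of_mul_le_mul_left (by linarith [hfinal] : j * (f O - a (m+1)) ≤ j * ((j / ((k:ℝ) + 1)) ^ γ * f O)) hj0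
      have hcast2 : (((k - (m+1) : ℕ) : ℝ) + 1) = j := by
        rw [hj]
        have : (k - (m+1)) + 1 = k - m := by omega
        rw [← this]; push_cast; ring
      rw [hcast2]
      exact h8
  have hmain := main (k - i) (Nat.sub_le k i)
  rw [Nat.sub_sub_self hi] at hmain
  rw [ge_iff_le, hcard (k - i)]
  have : a (k - i) = (∑ S ∈ O.powersetCard (k - i), f S) / ((k.choose (k-i) : ℝ)) := rfl
  linarith [this ▸ hmain]
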